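/- Let A = K⟨X₁,…,X₆⟩ be the free associative algebra over a field K on six generators. The map φ : A⁴ → A defined by φ(q₃,q₁',q₂',q₃') = q₃(1 − X₂X₃X₁) + q₁'(X₃X₁ − X₅) + q₂'(X₁ − X₆X₃X₁) + q₃'(1 − X₄X₁) is an injective left A-module homomorphism. -/

import Mathlib

noncomputable section
namespace Stmt1Aux
variable {K : Type*} [Field K]

/-- Right division by the letter `i`. -/
def Dfun (i : Fin 6) (p : MonoidAlgebra K (FreeMonoid (Fin 6))) :
    MonoidAlgebra K (FreeMonoid (Fin 6)) :=
  MonoidAlgebra.ofCoeff (Finsupp.mapDomain (fun w => FreeMonoid.ofList (FreeMonoid.toList w).dropLast)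
    (Finsupp.filter (fun w => (FreeMonoid.toList w).getLast? = some i) p.coeff))

def D (i : Fin 6) :
    MonoidAlgebra K (FreeMonoid (Fin 6)) →+ MonoidAlgebra K (FreeMonoid (Fin 6)) :=
  AddMonoidHom.mk' (Dfun i) (by
    intro p q
    unfold Dfun
    rw [MonoidAlgebra.coeff_add, Finsupp.filter_add, Finsupp.mapDomain_add, MonoidAlgebra.ofCoeff_add])

lemma D_single_concat (i j : Fin 6) (w : FreeMonoid (Fin 6)) (c : K) :
    D i (MonoidAlgebra.single (w * FreeMonoid.of j) c)
      = if i = j then MonoidAlgebra.single w c else 0 := by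
  have hlast : (FreeMonoid.toList (w * FreeMonoid.of j)).getLast? = some j := by
    rw [FreeMonoid.toList_mul, FreeMonoid.toList_of]
    exact List.getLast?_concat
  show Dfun i _ = _
  unfold Dfun
  rw [MonoidAlgebra.coeff_single]
  by_cases h : i = j
  · subst h
    rw [Finsupp.filter_single_of_pos (p := fun w => (FreeMonoid.toList w).getLast? = some i) hlast, Finsupp.mapDomain_single, MonoidAlgebra.ofCoeff_single]
    rw [if_pos rfl]
    congr 1
    rw [FreeMonoid.toList_mul, FreeMonoid.toList_of, List.dropLast_concat]
    exact FreeMonoid.ofList_toList w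
  · rw [Finsupp.filter_single_of_neg (p := fun w => (FreeMonoid.toList w).getLast? = some i)
      (by intro hc; exact h (Option.some.inj (hlast.symm.trans hc)).symm), Finsupp.mapDomain_zero,
      MonoidAlgebra.ofCoeff_zero, if_neg h]


lemma D_mul_X (i j : Fin 6) (p : MonoidAlgebra K (FreeMonoid (Fin 6))) :
    D i (p * MonoidAlgebra.single (FreeMonoid.of j) 1) = if i = j then p else 0 := by
  induction p using MonoidAlgebra.induction_linear with
  | zero => simp
  | add f g hf hg =>
      rw [add_mul, map_add, hf, hg]
      split <;> simp
  | single w c =>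
      rw [MonoidAlgebra.single_mul_single, mul_one, D_single_concat]

lemma D_one (i : Fin 6) : D i (1 : MonoidAlgebra K (FreeMonoid (Fin 6))) = 0 := by
  show Dfun i _ = _
  unfold Dfun
  rw [show (1 : MonoidAlgebra K (FreeMonoid (Fin 6)))
      = MonoidAlgebra.single (1 : FreeMonoid (Fin 6)) 1 from rfl, MonoidAlgebra.coeff_single]
  rw [Finsupp.filter_single_of_neg (p := fun w => (FreeMonoid.toList w).getLast? = some i)
    (by simp [FreeMonoid.toList_one]), Finsupp.mapDomain_zero, MonoidAlgebra.ofCoeff_zero]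

lemma D_support {i : Fin 6} {p : MonoidAlgebra K (FreeMonoid (Fin 6))} {n : ℕ}
    (h : ∀ w ∈ p.coeff.support, (FreeMonoid.toList w).length < n + 1) :
    ∀ w ∈ (D i p).coeff.support, (FreeMonoid.toList w).length < n := by
  intro w hw
  classical
  have h1 : w ∈ ((Finsupp.filter (fun w => (FreeMonoid.toList w).getLast? = some i) p.coeff).support).image
      (fun w => FreeMonoid.ofList (FreeMonoid.toList w).dropLast) :=
    Finsupp.mapDomain_support hw
  obtain ⟨u, hu, rfl⟩ := Finset.mem_image.mp h1
  rw [Finsupp.support_filter, Finset.mem_filter] at hu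
  obtain ⟨hup, hlast⟩ := hu
  have hne : FreeMonoid.toList u ≠ [] := by
    intro hnil
    rw [hnil] at hlast
    simp at hlast
  have := h u hup
  have hlen : (FreeMonoid.toList u).dropLast.length = (FreeMonoid.toList u).length - 1 := by
    simp
  rw [show FreeMonoid.toList (FreeMonoid.ofList (FreeMonoid.toList u).dropLast)
      = (FreeMonoid.toList u).dropLast from rfl, hlen]
  have hpos : 0 < (FreeMonoid.toList u).length := List.length_pos_iff.mpr hne
  omega


def Y (j : Fin 6) : MonoidAlgebra K (FreeMonoid (Fin 6)) :=
  MonoidAlgebra.single (FreeMonoid.of j) 1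

lemma D_mul_Y (i j : Fin 6) (p : MonoidAlgebra K (FreeMonoid (Fin 6))) :
    D i (p * Y j) = if i = j then p else 0 := D_mul_X i j p

lemma key (p0 p1 p2 p3 : MonoidAlgebra K (FreeMonoid (Fin 6)))
    (hE : p0 * (1 - Y 1 * Y 2 * Y 0) + p1 * (Y 2 * Y 0 - Y 4)
        + p2 * (Y 0 - Y 5 * Y 2 * Y 0) + p3 * (1 - Y 3 * Y 0) = 0) :
    p0 = 0 ∧ p1 = 0 ∧ p2 = 0 ∧ p3 = 0 := by
  classical
  have E0 : (p0 + p3) + (p1 * Y 2) * Y 0 + p2 * Y 0 - ((p0 * Y 1) * Y 2) * Y 0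
      - p1 * Y 4 - ((p2 * Y 5) * Y 2) * Y 0 - (p3 * Y 3) * Y 0 = 0 := by
    rw [← hE]; noncomm_ring
  have E1 : D 0 p0 + D 0 p3 + p1 * Y 2 + p2 - (p0 * Y 1) * Y 2
      - (p2 * Y 5) * Y 2 - p3 * Y 3 = 0 := by
    have := congrArg (⇑(D 0)) E0
    simpa [map_add, map_sub, D_mul_Y] using this
  have E2 : D 2 (D 0 p0) + D 2 (D 0 p3) + p1 + D 2 p2 - p0 * Y 1 - p2 * Y 5 = 0 := by
    have := congrArg (⇑(D 2)) E1
    simpa [map_add, map_sub, D_mul_Y] using this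
  have I1 : p1 = D 4 p0 + D 4 p3 := by
    have := congrArg (⇑(D 4)) E0
    simp [map_add, map_sub, D_mul_Y] at this
    linear_combination (norm := abel) -this
  have I2 : p3 = D 3 (D 0 p0) + D 3 (D 0 p3) + D 3 p2 := by
    have := congrArg (⇑(D 3)) E1
    simp [map_add, map_sub, D_mul_Y] at this
    linear_combination (norm := abel) -this
  have I3 : p0 = D 1 (D 2 (D 0 p0)) + D 1 (D 2 (D 0 p3)) + D 1 p1 + D 1 (D 2 p2) := by
    have := congrArg (⇑(D 1)) E2
    simp [map_add, map_sub, D_mul_Y] at this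
    linear_combination (norm := abel) -this
  have I4 : p2 = D 5 (D 2 (D 0 p0)) + D 5 (D 2 (D 0 p3)) + D 5 p1 + D 5 (D 2 p2) := by
    have := congrArg (⇑(D 5)) E2
    simp [map_add, map_sub, D_mul_Y] at this
    linear_combination (norm := abel) -this
  set B : ℕ → MonoidAlgebra K (FreeMonoid (Fin 6)) → Prop :=
    fun n x => ∀ w ∈ x.coeff.support, (FreeMonoid.toList w).length < n with hBdef
  have hB0 : ∀ x, B 0 x → x = 0 := by
    intro x hx
    exact MonoidAlgebra.coeff_injective (Finsupp.support_eq_empty.mp (Finset.eq_empty_of_forall_notMem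
      (fun w hw => absurd (hx w hw) (Nat.not_lt_zero _))))
  have hBmono : ∀ {n x}, B n x → B (n + 1) x :=
    fun h w hw => Nat.lt_succ_of_lt (h w hw)
  have hBadd : ∀ {n x y}, B n x → B n y → B n (x + y) := by
    intro n x y hx hy w hw
    rcases Finset.mem_union.mp (Finsupp.support_add hw) with h | h
    · exact hx w h
    · exact hy w h
  have hBD : ∀ {n x} (i : Fin 6), B (n + 1) x → B n (D i x) :=
    fun i h => D_support h
  have ind : ∀ n : ℕ, B n p0 → B n p1 → B n p2 → B n p3 →
      p0 = 0 ∧ p1 = 0 ∧ p2 = 0 ∧ p3 = 0 := by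
    intro n
    induction n with
    | zero => intro h0 h1 h2 h3; exact ⟨hB0 _ h0, hB0 _ h1, hB0 _ h2, hB0 _ h3⟩
    | succ n IH =>
        intro h0 h1 h2 h3
        have d0 : B n (D 0 p0) := hBD 0 h0
        have d3 : B n (D 0 p3) := hBD 0 h3
        have dd0 : B n (D 2 (D 0 p0)) := hBD 2 (hBmono d0)
        have dd3 : B n (D 2 (D 0 p3)) := hBD 2 (hBmono d3)
        have b1 : B n p1 := by rw [I1]; exact hBadd (hBD 4 h0) (hBD 4 h3)
        have b3 : B n p3 := by
          rw [I2]
          exact hBadd (hBadd (hBD 3 (hBmono d0)) (hBD 3 (hBmono d3))) (hBD 3 h2)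
        have b0 : B n p0 := by
          rw [I3]
          exact hBadd (hBadd (hBadd (hBD 1 (hBmono dd0)) (hBD 1 (hBmono dd3)))
            (hBD 1 h1)) (hBD 1 (hBmono (hBD 2 h2)))
        have b2 : B n p2 := by
          rw [I4]
          exact hBadd (hBadd (hBadd (hBD 5 (hBmono dd0)) (hBD 5 (hBmono dd3)))
            (hBD 5 h1)) (hBD 5 (hBmono (hBD 2 h2)))
        exact IH b0 b1 b2 b3
  set N : ℕ := (((p0.coeff.support ∪ p1.coeff.support) ∪ (p2.coeff.support ∪ p3.coeff.support)).sup
    fun w => (FreeMonoid.toList w).length) + 1 with hN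
  have hb : ∀ (x : MonoidAlgebra K (FreeMonoid (Fin 6))),
      x.coeff.support ⊆ ((p0.coeff.support ∪ p1.coeff.support) ∪ (p2.coeff.support ∪ p3.coeff.support)) → B N x := by
    intro x hx w hw
    exact Nat.lt_succ_of_le (Finset.le_sup (hx hw))
  exact ind N (hb p0 (by intro w hw; simp [hw])) (hb p1 (by intro w hw; simp [hw]))
    (hb p2 (by intro w hw; simp [hw])) (hb p3 (by intro w hw; simp [hw]))

end Stmt1Aux
end

open Stmt1Aux in
/-- The map `φ : A⁴ → A` on the free associative algebra `A = K⟨X₁,…,X₆⟩`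
(generators indexed `0,…,5`), given by
`φ(q₃,q₁',q₂',q₃') = q₃(1 − X₂X₃X₁) + q₁'(X₃X₁ − X₅) + q₂'(X₁ − X₆X₃X₁) + q₃'(1 − X₄X₁)`,
is an injective left `A`-module homomorphism. -/
theorem stmt_1 (K : Type*) [Field K]
    (φ : (Fin 4 → FreeAlgebra K (Fin 6)) → FreeAlgebra K (Fin 6))
    (hφ : ∀ q : Fin 4 → FreeAlgebra K (Fin 6),
      φ q = q 0 * (1 - FreeAlgebra.ι K 1 * FreeAlgebra.ι K 2 * FreeAlgebra.ι K 0)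
        + q 1 * (FreeAlgebra.ι K 2 * FreeAlgebra.ι K 0 - FreeAlgebra.ι K 4)
        + q 2 * (FreeAlgebra.ι K 0
            - FreeAlgebra.ι K 5 * FreeAlgebra.ι K 2 * FreeAlgebra.ι K 0)
        + q 3 * (1 - FreeAlgebra.ι K 3 * FreeAlgebra.ι K 0)) :
    Function.Injective φ ∧
      (∀ v w : Fin 4 → FreeAlgebra K (Fin 6), φ (v + w) = φ v + φ w) ∧
      (∀ (a : FreeAlgebra K (Fin 6)) (v : Fin 4 → FreeAlgebra K (Fin 6)),
        φ (a • v) = a * φ v) := by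
  refine ⟨?_, ?_, ?_⟩
  · intro v w h
    set e := FreeAlgebra.equivMonoidAlgebraFreeMonoid (R := K) (X := Fin 6) with he_def
    have he : ∀ j : Fin 6, e (FreeAlgebra.ι K j) = Y j := by
      intro j
      simp [he_def, FreeAlgebra.equivMonoidAlgebraFreeMonoid, Y,
        FreeAlgebra.lift_ι_apply, MonoidAlgebra.of_apply]
    have hsub : (0 : FreeAlgebra K (Fin 6))
        = (v 0 - w 0) * (1 - FreeAlgebra.ι K 1 * FreeAlgebra.ι K 2 * FreeAlgebra.ι K 0)
        + (v 1 - w 1) * (FreeAlgebra.ι K 2 * FreeAlgebra.ι K 0 - FreeAlgebra.ι K 4)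
        + (v 2 - w 2) * (FreeAlgebra.ι K 0
            - FreeAlgebra.ι K 5 * FreeAlgebra.ι K 2 * FreeAlgebra.ι K 0)
        + (v 3 - w 3) * (1 - FreeAlgebra.ι K 3 * FreeAlgebra.ι K 0) := by
      have : φ v - φ w = 0 := by rw [h, sub_self]
      rw [hφ v, hφ w] at this
      rw [← this]
      noncomm_ring
    have hE : (e (v 0) - e (w 0)) * (1 - Y 1 * Y 2 * Y 0)
        + (e (v 1) - e (w 1)) * (Y 2 * Y 0 - Y 4)
        + (e (v 2) - e (w 2)) * (Y 0 - Y 5 * Y 2 * Y 0)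
        + (e (v 3) - e (w 3)) * (1 - Y 3 * Y 0) = 0 := by
      have h2 := congrArg e hsub
      simp only [map_zero, map_add, map_mul, map_sub, map_one, he] at h2
      exact h2.symm
    obtain ⟨z0, z1, z2, z3⟩ := key _ _ _ _ hE
    funext i
    fin_cases i
    · exact e.injective (sub_eq_zero.mp z0)
    · exact e.injective (sub_eq_zero.mp z1)
    · exact e.injective (sub_eq_zero.mp z2)
    · exact e.injective (sub_eq_zero.mp z3)
  · intro v w
    rw [hφ, hφ, hφ]
    simp only [Pi.add_apply]
    noncomm_ring
  · intro a v
    rw [hφ, hφ]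
    simp only [Pi.smul_apply, smul_eq_mul]
    noncomm_ring
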